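/- Let x : V × {1,…,ℓ} → {0,1} satisfy Σ_{v∈V} x(v,s) = 1 for all s, and the pairwise connectivity constraints x(v0,s) + x(v,s+1) ≤ 1 for all v0 ∈ V, v ∈ V(v0), 1 ≤ s < ℓ. Then for every v0 ∈ V and 1 ≤ s < ℓ, the aggregated inequality Σ_{v∈V\V(v0)} x(v,s) ≤ Σ_{v∈V\V(v0)} x(v,s+1) holds. -/
import Mathlib


/-- If a binary assignment `x` satisfies the assignment constraints and the pairwise
connectivity constraints `x(v0,s) + x(v,s+1) ≤ 1` for `v ∈ V(v0)`, then the aggregated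
inequality `Σ_{v∈V∖V(v0)} x(v,s) ≤ Σ_{v∈V∖V(v0)} x(v,s+1)` holds for all `v0 ∈ V` and
`1 ≤ s < ℓ`. -/
theorem pairwise_implies_aggregated {I : Type*} [DecidableEq I] (L : I → I → Prop)
    [DecidableRel (Relation.ReflTransGen L)] (V : Finset I) (ℓ : ℕ) (x : I → ℕ → ℤ)
    (hbin : ∀ v ∈ V, ∀ s, x v s = 0 ∨ x v s = 1)
    (hassign : ∀ s, 1 ≤ s → s ≤ ℓ → ∑ v ∈ V, x v s = 1)
    (hpair : ∀ v0 ∈ V, ∀ v ∈ V, v ≠ v0 → ¬ Relation.ReflTransGen L v0 v →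
      ∀ s, 1 ≤ s → s < ℓ → x v0 s + x v (s + 1) ≤ 1) :
    ∀ v0 ∈ V, ∀ s, 1 ≤ s → s < ℓ →
      ∑ v ∈ V.filter (fun v => v = v0 ∨ Relation.ReflTransGen L v0 v), x v s
        ≤ ∑ v ∈ V.filter (fun v => v = v0 ∨ Relation.ReflTransGen L v0 v), x v (s + 1) := by
  intro v0 hv0 s hs1 hsl
  set P : I → Prop := fun v => v = v0 ∨ Relation.ReflTransGen L v0 v with hP
  have hnonneg : ∀ t, ∀ v ∈ V, 0 ≤ x v t := by
    intro t v hv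
    rcases hbin v hv t with h | h <;> omega
  by_cases hall : ∀ v' ∈ V.filter P, x v' s = 0
  · have h0 : ∑ v ∈ V.filter P, x v s = 0 := Finset.sum_eq_zero hall
    rw [h0]
    exact Finset.sum_nonneg fun v hv => hnonneg _ v (Finset.mem_filter.mp hv).1
  · push_neg at hall
    obtain ⟨v', hv'A, hv'ne⟩ := hall
    obtain ⟨hv'V, hv'P⟩ := Finset.mem_filter.mp hv'A
    have hv'1 : x v' s = 1 := by rcases hbin v' hv'V s with h | h <;> [exact absurd h hv'ne; exact h]
    -- every v in the complement has x v (s+1) = 0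
    have hBzero : ∀ v ∈ V.filter (fun v => ¬ P v), x v (s + 1) = 0 := by
      intro v hv
      obtain ⟨hvV, hvnP⟩ := Finset.mem_filter.mp hv
      simp only [hP, not_or] at hvnP
      obtain ⟨hvne0, hvnreach⟩ := hvnP
      have hvne' : v ≠ v' := by
        intro h; subst h
        rcases hv'P with h | h
        · exact hvne0 h
        · exact hvnreach h
      have hnreach' : ¬ Relation.ReflTransGen L v' v := by
        intro h
        rcases hv'P with h0 | h0
        · exact hvnreach (h0 ▸ h)
        · exact hvnreach (h0.trans h)
      have := hpair v' hv'V v hvV hvne' hnreach' s hs1 hsl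
      rcases hbin v hvV (s + 1) with h | h
      · exact h
      · omega
    have hsplit : ∀ t, ∑ v ∈ V.filter P, x v t + ∑ v ∈ V.filter (fun v => ¬ P v), x v t
        = ∑ v ∈ V, x v t := fun t => Finset.sum_filter_add_sum_filter_not V P (fun v => x v t)
    have hs' := hassign s hs1 (le_of_lt hsl)
    have hs1' := hassign (s + 1) (by omega) (by omega)
    have hB1 : ∑ v ∈ V.filter (fun v => ¬ P v), x v (s + 1) = 0 :=
      Finset.sum_eq_zero hBzero
    have hBnn : 0 ≤ ∑ v ∈ V.filter (fun v => ¬ P v), x v s :=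
      Finset.sum_nonneg fun v hv => hnonneg _ v (Finset.mem_filter.mp hv).1
    have e1 := hsplit s
    have e2 := hsplit (s + 1)
    linarith
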